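/- Let d be a positive integer, let μ, ν : ℝ^d → [0,∞) be probability densities with respect to Lebesgue measure, and let k : ℝ^d × ℝ^d → [0,∞) be a measurable function, written k(x₁, x₀), with ∫ k(x₁, x₀) dx₁ = 1 for every x₀. Let φ₀, φ̂₀, φ₁, φ̂₁ : ℝ^d → (0,∞) be measurable functions solving the Schrödinger system: φ₀(x) = ∫ k(y, x) φ₁(y) dy for all x, φ̂₁(x) = ∫ k(x, y) φ̂₀(y) dy for all x, φ₀(x)·φ̂₀(x) = μ(x) for all x, and φ₁(x)·φ̂₁(x) = ν(x) for all x. Define the optimal joint density p*(x₀, x₁) := μ(x₀) · k(x₁, x₀) · exp(−log(φ̂₁(x₁)/ν(x₁)) − log φ₀(x₀)). Then for every x₁ ∈ ℝ^d, ∫ p*(x₀, x₁) dx₀ = ν(x₁); i.e., the terminal marginal of the optimal distribution equals the target distribution ν. -/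

import Mathlib

open MeasureTheory

/-- **The debiasing identity (equation (7)).**
Given a Schrödinger system `(φ₀, ψ₀, φ₁, ψ₁)` (with `ψ = φ̂`) between a source density `μ`
and a target density `ν` for a base transition density `k`, the terminal marginal of the
optimal joint density `p*(x₀, x₁) = μ(x₀) k(x₁, x₀) exp(−log(φ̂₁(x₁)/ν(x₁)) − log φ₀(x₀))`
equals the target `ν`. -/
theorem sb_terminal_marginal_is_target
    (d : ℕ) (hd : 0 < d)
    (μ ν : EuclideanSpace ℝ (Fin d) → ℝ)
    (hμ_meas : Measurable μ) (hν_meas : Measurable ν)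
    (hμ_nonneg : ∀ x, 0 ≤ μ x) (hν_nonneg : ∀ x, 0 ≤ ν x)
    (hμ_prob : (∫ x, μ x) = 1) (hν_prob : (∫ x, ν x) = 1)
    (k : EuclideanSpace ℝ (Fin d) → EuclideanSpace ℝ (Fin d) → ℝ)
    (hk_meas : Measurable (Function.uncurry k))
    (hk_nonneg : ∀ x₁ x₀, 0 ≤ k x₁ x₀)
    (hk_prob : ∀ x₀, (∫ x₁, k x₁ x₀) = 1)
    (φ₀ ψ₀ φ₁ ψ₁ : EuclideanSpace ℝ (Fin d) → ℝ)
    (hφ₀_meas : Measurable φ₀) (hψ₀_meas : Measurable ψ₀)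
    (hφ₁_meas : Measurable φ₁) (hψ₁_meas : Measurable ψ₁)
    (hφ₀_pos : ∀ x, 0 < φ₀ x) (hψ₀_pos : ∀ x, 0 < ψ₀ x)
    (hφ₁_pos : ∀ x, 0 < φ₁ x) (hψ₁_pos : ∀ x, 0 < ψ₁ x)
    (hφ₀_eq : ∀ x, φ₀ x = ∫ y, k y x * φ₁ y)
    (hψ₁_eq : ∀ x, ψ₁ x = ∫ y, k x y * ψ₀ y)
    (hμ_couple : ∀ x, φ₀ x * ψ₀ x = μ x)
    (hν_couple : ∀ x, φ₁ x * ψ₁ x = ν x)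
    (pstar : EuclideanSpace ℝ (Fin d) → EuclideanSpace ℝ (Fin d) → ℝ)
    (hpstar : ∀ x₀ x₁, pstar x₀ x₁
      = μ x₀ * k x₁ x₀ * Real.exp (-Real.log (ψ₁ x₁ / ν x₁) - Real.log (φ₀ x₀))) :
    ∀ x₁, (∫ x₀, pstar x₀ x₁) = ν x₁ := by
  intro x₁
  have hν₁ : 0 < ν x₁ := by
    rw [← hν_couple x₁]; exact mul_pos (hφ₁_pos x₁) (hψ₁_pos x₁)
  have hr : ∀ x₀, pstar x₀ x₁ = (ν x₁ / ψ₁ x₁) * (k x₁ x₀ * ψ₀ x₀) := by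
    intro x₀
    have h1 : Real.exp (-Real.log (ψ₁ x₁ / ν x₁) - Real.log (φ₀ x₀))
        = (ν x₁ / ψ₁ x₁) * (φ₀ x₀)⁻¹ := by
      rw [sub_eq_add_neg, Real.exp_add, Real.exp_neg, Real.exp_neg,
        Real.exp_log (div_pos (hψ₁_pos x₁) hν₁), Real.exp_log (hφ₀_pos x₀), inv_div]
    rw [hpstar, h1, ← hμ_couple x₀]
    field_simp [(hφ₀_pos x₀).ne']
  calc ∫ x₀, pstar x₀ x₁ = ∫ x₀, (ν x₁ / ψ₁ x₁) * (k x₁ x₀ * ψ₀ x₀) := by simp_rw [hr]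
    _ = (ν x₁ / ψ₁ x₁) * ∫ x₀, k x₁ x₀ * ψ₀ x₀ := integral_const_mul _ _
    _ = (ν x₁ / ψ₁ x₁) * ψ₁ x₁ := by rw [← hψ₁_eq]
    _ = ν x₁ := div_mul_cancel₀ _ (hψ₁_pos x₁).ne'
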